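/- The Jaccard distance on nonempty finite subsets of a finite type satisfies the triangle inequality: d(A,C) ≤ d(A,B) + d(B,C). -/

import Mathlib

/-- Jaccard distance between finite sets, with the convention `d ∅ ∅ = 0`. -/
def jaccardDist {α : Type*} [DecidableEq α] (A B : Finset α) : ℚ :=
  if A ∪ B = ∅ then 0 else 1 - ((A ∩ B).card : ℚ) / ((A ∪ B).card : ℚ)

open Finset

lemma jaccard_key (a b c p q r : ℚ) (ha : 0 < a) (hb : 0 < b) (hc : 0 < c)
    (hp : 0 ≤ p) (hq : 0 ≤ q) (hr : 0 ≤ r)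
    (h1 : p ≤ q + r) (h2 : b ≤ c + r) (h3 : b ≤ a + q) :
    2*p/(a+c+p) ≤ 2*q/(a+b+q) + 2*r/(b+c+r) := by
  have d1 : 0 < a+c+p := by linarith
  have d4 : 0 < a+c+q+r := by linarith
  have d2 : 0 < a+b+q := by linarith
  have d3 : 0 < b+c+r := by linarith
  calc 2*p/(a+c+p) ≤ 2*(q+r)/(a+c+q+r) := by
        rw [div_le_div_iff₀ d1 d4]; nlinarith
    _ = 2*q/(a+c+q+r) + 2*r/(a+c+q+r) := by ring
    _ ≤ 2*q/(a+b+q) + 2*r/(b+c+r) := by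
        apply add_le_add
        · apply div_le_div_of_nonneg_left (by linarith) d2 (by linarith)
        · apply div_le_div_of_nonneg_left (by linarith) d3 (by linarith)

lemma jaccard_eq {α : Type*} [DecidableEq α] (X Y : Finset α) (h : (X ∪ Y).Nonempty) :
    jaccardDist X Y = 2*((symmDiff X Y).card : ℚ) /
      ((X.card : ℚ) + (Y.card : ℚ) + ((symmDiff X Y).card : ℚ)) := by
  have hne : X ∪ Y ≠ ∅ := h.ne_empty
  have hu0 : 0 < ((X ∪ Y).card : ℚ) := by
    exact_mod_cast Finset.card_pos.mpr h
  have hdisj : Disjoint (symmDiff X Y) (X ∩ Y) := by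
    rw [Finset.disjoint_left]
    intro x hx hx2
    simp [Finset.mem_symmDiff, Finset.mem_inter] at hx hx2
    tauto
  have hsu : symmDiff X Y ∪ (X ∩ Y) = X ∪ Y := by
    ext x
    simp [Finset.mem_symmDiff, Finset.mem_union, Finset.mem_inter]
    tauto
  have h1 : ((symmDiff X Y).card : ℚ) + ((X ∩ Y).card : ℚ) = ((X ∪ Y).card : ℚ) := by
    rw [← hsu, Finset.card_union_of_disjoint hdisj]
    push_cast; ring
  have h2 : ((X ∪ Y).card : ℚ) + ((X ∩ Y).card : ℚ) = (X.card : ℚ) + (Y.card : ℚ) := by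
    exact_mod_cast congrArg (Nat.cast : ℕ → ℚ) (Finset.card_union_add_card_inter X Y)
  rw [jaccardDist, if_neg hne]
  rw [← h2]
  have hs : ((symmDiff X Y).card : ℚ) = ((X ∪ Y).card : ℚ) - ((X ∩ Y).card : ℚ) := by
    linarith
  rw [hs]
  field_simp
  have hu1 : ((X ∪ Y).card : ℚ) ≠ 0 := hu0.ne'
  have hd : ((X ∪ Y).card : ℚ) + ((X ∩ Y).card : ℚ) + (((X ∪ Y).card : ℚ) - ((X ∩ Y).card : ℚ)) = 2 * ((X ∪ Y).card : ℚ) := by ring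
  rw [hd, eq_div_iff (mul_ne_zero two_ne_zero hu1)]
  ring

/-- The Jaccard distance on nonempty finite sets satisfies the triangle inequality. -/
theorem jaccardDist_triangle {α : Type*} [DecidableEq α] (A B C : Finset α)
    (hA : A.Nonempty) (hB : B.Nonempty) (hC : C.Nonempty) :
    jaccardDist A C ≤ jaccardDist A B + jaccardDist B C := by
  rw [jaccard_eq A C (by exact hA.mono Finset.subset_union_left),
      jaccard_eq A B (by exact hA.mono Finset.subset_union_left),
      jaccard_eq B C (by exact hB.mono Finset.subset_union_left)]
  apply jaccard_key
  · exact_mod_cast Finset.card_pos.mpr hA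
  · exact_mod_cast Finset.card_pos.mpr hB
  · exact_mod_cast Finset.card_pos.mpr hC
  · positivity
  · positivity
  · positivity
  · -- triangle for symmetric difference
    have hsub : symmDiff A C ⊆ symmDiff A B ∪ symmDiff B C := by
      intro x hx
      simp [Finset.mem_symmDiff, Finset.mem_union] at *
      tauto
    have := (Finset.card_le_card hsub).trans (Finset.card_union_le _ _)
    exact_mod_cast this
  · have hsub : B ⊆ C ∪ symmDiff B C := by
      intro x hx
      simp [Finset.mem_symmDiff, Finset.mem_union]
      tauto
    have := (Finset.card_le_card hsub).trans (Finset.card_union_le _ _)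
    exact_mod_cast this
  · have hsub : B ⊆ A ∪ symmDiff A B := by
      intro x hx
      simp [Finset.mem_symmDiff, Finset.mem_union]
      tauto
    have := (Finset.card_le_card hsub).trans (Finset.card_union_le _ _)
    exact_mod_cast this
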